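/- arXiv:2210.09295 — 2 statements merged into one kernel-verified Lean document; each statement's English description precedes it below -/
import Mathlib

section
/- Perceptron convergence theorem: if a sequence of training examples (xᵢ, yᵢ) with yᵢ ∈ {−1, 1}, ‖xᵢ‖ ≤ R, is linearly separable with margin γ > 0 by a unit vector w* (i.e., yᵢ⟨w*, xᵢ⟩ ≥ γ for all i), then the perceptron algorithm starting from w = 0 makes at most R²/γ² mistakes. -/
open Finset

/-- Perceptron convergence theorem: if the examples `(xᵢ, yᵢ)`, `yᵢ ∈ {-1,1}`,
`‖xᵢ‖ ≤ R`, are separated with margin `γ > 0` by a unit vector `w*`, then a run of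
the perceptron starting from `w 0 = 0` makes at most `R²/γ²` mistakes. -/
theorem perceptron_convergence {d : ℕ} {ι : Type*}
    (x : ι → EuclideanSpace ℝ (Fin d)) (y : ι → ℝ)
    (hy : ∀ i, y i = 1 ∨ y i = -1)
    (R γ : ℝ) (hR : ∀ i, ‖x i‖ ≤ R) (hγ : 0 < γ)
    (wstar : EuclideanSpace ℝ (Fin d)) (hws : ‖wstar‖ = 1)
    (hmargin : ∀ i, γ ≤ y i * (inner ℝ wstar (x i) : ℝ))
    (M : ℕ) (w : ℕ → EuclideanSpace ℝ (Fin d)) (idx : ℕ → ι)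
    (hw0 : w 0 = 0)
    (hmistake : ∀ t < M, y (idx t) * (inner ℝ (w t) (x (idx t)) : ℝ) ≤ 0)
    (hupdate : ∀ t < M, w (t + 1) = w t + y (idx t) • x (idx t)) :
    (M : ℝ) ≤ R ^ 2 / γ ^ 2 := by
  rcases Nat.eq_zero_or_pos M with hM0 | hMpos
  · simp [hM0]
    positivity
  have hR0 : 0 ≤ R := le_trans (norm_nonneg _) (hR (idx 0))
  -- lower bound on inner product
  have hA : ∀ t ≤ M, (t : ℝ) * γ ≤ (inner ℝ wstar (w t) : ℝ) := by
    intro t ht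
    induction t with
    | zero => simp [hw0]
    | succ n ih =>
      have hn : n < M := Nat.lt_of_succ_le ht
      have ih' := ih (le_of_lt hn)
      rw [hupdate n hn]
      rw [inner_add_right, real_inner_smul_right]
      have := hmargin (idx n)
      push_cast
      have : γ ≤ y (idx n) * (inner ℝ wstar (x (idx n)) : ℝ) := hmargin (idx n)
      nlinarith
  -- upper bound on norm
  have hB : ∀ t ≤ M, ‖w t‖ ^ 2 ≤ (t : ℝ) * R ^ 2 := by
    intro t ht
    induction t with
    | zero => simp [hw0]
    | succ n ih =>
      have hn : n < M := Nat.lt_of_succ_le ht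
      have ih' := ih (le_of_lt hn)
      rw [hupdate n hn]
      have hexp : ‖w n + y (idx n) • x (idx n)‖ ^ 2
          = ‖w n‖ ^ 2 + 2 * (y (idx n) * (inner ℝ (w n) (x (idx n)) : ℝ))
            + (y (idx n))^2 * ‖x (idx n)‖ ^ 2 := by
        rw [norm_add_sq_real, real_inner_smul_right, norm_smul, mul_pow,
          Real.norm_eq_abs, sq_abs]
      rw [hexp]
      have h1 := hmistake n hn
      have h2 : (y (idx n))^2 = 1 := by rcases hy (idx n) with h | h <;> simp [h]
      have h3 : ‖x (idx n)‖ ^ 2 ≤ R ^ 2 := by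
        have := hR (idx n); nlinarith [norm_nonneg (x (idx n))]
      push_cast
      nlinarith
  have hAM := hA M le_rfl
  have hBM := hB M le_rfl
  have hcs : (inner ℝ wstar (w M) : ℝ) ≤ ‖w M‖ := by
    have := real_inner_le_norm wstar (w M)
    rwa [hws, one_mul] at this
  have hMγ : (M : ℝ) * γ ≤ ‖w M‖ := le_trans hAM hcs
  have hMpos' : (0 : ℝ) < M := by exact_mod_cast hMpos
  have h0 : (0:ℝ) ≤ (M : ℝ) * γ := by positivity
  have hsq : ((M : ℝ) * γ) ^ 2 ≤ (M : ℝ) * R ^ 2 :=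
    le_trans (pow_le_pow_left₀ h0 hMγ 2) hBM
  rw [le_div_iff₀ (by positivity)]
  nlinarith
end

section
/- In the perceptron convergence setting, after M mistakes the weight vector w satisfies ⟨w, w*⟩ ≥ Mγ and ‖w‖² ≤ MR², and combining these via Cauchy–Schwarz yields M ≤ R²/γ². -/
/-- In the perceptron convergence setting, after `M` mistakes the weight vector
satisfies `⟨w, w*⟩ ≥ Mγ` and `‖w‖² ≤ MR²`, which via Cauchy–Schwarz give `M ≤ R²/γ²`. -/
theorem perceptron_invariants {d : ℕ} {ι : Type*}
    (x : ι → EuclideanSpace ℝ (Fin d)) (y : ι → ℝ)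
    (hy : ∀ i, y i = 1 ∨ y i = -1)
    (R γ : ℝ) (hR : ∀ i, ‖x i‖ ≤ R) (hγ : 0 < γ)
    (wstar : EuclideanSpace ℝ (Fin d)) (hws : ‖wstar‖ = 1)
    (hmargin : ∀ i, γ ≤ y i * (inner ℝ wstar (x i) : ℝ))
    (M : ℕ) (w : ℕ → EuclideanSpace ℝ (Fin d)) (idx : ℕ → ι)
    (hw0 : w 0 = 0)
    (hmistake : ∀ t < M, y (idx t) * (inner ℝ (w t) (x (idx t)) : ℝ) ≤ 0)
    (hupdate : ∀ t < M, w (t + 1) = w t + y (idx t) • x (idx t)) :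
    (M : ℝ) * γ ≤ (inner ℝ (w M) wstar : ℝ) ∧
    ‖w M‖ ^ 2 ≤ (M : ℝ) * R ^ 2 ∧
    (M : ℝ) ≤ R ^ 2 / γ ^ 2 := by
  have key : ∀ t ≤ M, (t : ℝ) * γ ≤ (inner ℝ (w t) wstar : ℝ) ∧ ‖w t‖ ^ 2 ≤ (t : ℝ) * R ^ 2 := by
    intro t ht
    induction t with
    | zero => simp [hw0]
    | succ t ih =>
      have htM : t < M := ht
      obtain ⟨ih1, ih2⟩ := ih (le_of_lt htM)
      have hup := hupdate t htM
      have hy2 : y (idx t) ^ 2 = 1 := by rcases hy (idx t) with h | h <;> simp [h]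
      constructor
      · have : (inner ℝ (w (t+1)) wstar : ℝ)
            = (inner ℝ (w t) wstar : ℝ) + y (idx t) * (inner ℝ (x (idx t)) wstar : ℝ) := by
          rw [hup]; simp [inner_add_left, inner_smul_left]
        rw [this]
        have hm : γ ≤ y (idx t) * (inner ℝ (x (idx t)) wstar : ℝ) := by
          have := hmargin (idx t)
          rwa [real_inner_comm] at this
        push_cast
        nlinarith
      · have hx : ‖x (idx t)‖ ^ 2 ≤ R ^ 2 := by
          have := hR (idx t)
          nlinarith [norm_nonneg (x (idx t))]
        have : ‖w (t+1)‖ ^ 2 = ‖w t‖ ^ 2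
            + 2 * (y (idx t) * (inner ℝ (w t) (x (idx t)) : ℝ))
            + y (idx t) ^ 2 * ‖x (idx t)‖ ^ 2 := by
          rw [hup, norm_add_sq_real, norm_smul, real_inner_smul_right]
          rcases hy (idx t) with h | h <;> simp [h] <;> ring
        rw [this, hy2]
        have hmis := hmistake t htM
        push_cast
        nlinarith
  obtain ⟨h1, h2⟩ := key M le_rfl
  refine ⟨h1, h2, ?_⟩
  have hcs : (inner ℝ (w M) wstar : ℝ) ≤ ‖w M‖ := by
    calc (inner ℝ (w M) wstar : ℝ) ≤ ‖w M‖ * ‖wstar‖ := real_inner_le_norm _ _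
    _ = ‖w M‖ := by rw [hws, mul_one]
  have hMγ : (M : ℝ) * γ ≤ ‖w M‖ := le_trans h1 hcs
  have hsq : ((M : ℝ) * γ) ^ 2 ≤ (M : ℝ) * R ^ 2 := by
    have h0 : 0 ≤ (M : ℝ) * γ := mul_nonneg (Nat.cast_nonneg M) hγ.le
    nlinarith [h2, hMγ, h0]
  rcases Nat.eq_zero_or_pos M with h | h
  · simp [h]; positivity
  · have hMpos : (0 : ℝ) < M := by exact_mod_cast h
    rw [le_div_iff₀ (by positivity)]
    nlinarith
end
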